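/- Let w : [0,R] → ℝ be continuous with w > 0 on (0,R], and let u₁ : [0,R] → ℝ be positive and decreasing. Then for all 0 < r ≤ t ≤ R, (∫₀^r w^{m-1}) · (∫₀^t w^{m-1} u₁) − (∫₀^t w^{m-1}) · (∫₀^r w^{m-1} u₁) ≤ 0. -/
import Mathlib


open Set intervalIntegral
open Topology Filter

/-- cross-product inequality of the moment integrals. -/
theorem stmt_1 (m : ℕ) (hm : 1 ≤ m) (R : ℝ) (hR : 0 < R)
    (w u₁ : ℝ → ℝ)
    (hw : ContinuousOn w (Set.Icc 0 R))
    (hwpos : ∀ r ∈ Set.Ioc (0:ℝ) R, 0 < w r)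
    (hu₁pos : ∀ r ∈ Set.Icc (0:ℝ) R, 0 < u₁ r)
    (hu₁dec : AntitoneOn u₁ (Set.Icc 0 R)) :
    ∀ r t : ℝ, 0 < r → r ≤ t → t ≤ R →
      (∫ s in (0:ℝ)..r, w s ^ (m - 1)) * (∫ s in (0:ℝ)..t, w s ^ (m - 1) * u₁ s) -
        (∫ s in (0:ℝ)..t, w s ^ (m - 1)) * (∫ s in (0:ℝ)..r, w s ^ (m - 1) * u₁ s) ≤ 0 := by
  intro r t hr hrt htR
  have hrR : r ≤ R := hrt.trans htR
  have h0r : (0:ℝ) ≤ r := hr.le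
  have h0t : (0:ℝ) ≤ t := h0r.trans hrt
  -- w 0 ≥ 0
  have hw0 : 0 ≤ w 0 := by
    have hne : (𝓝[Set.Ioc (0:ℝ) R] 0).NeBot := by
      rw [← mem_closure_iff_nhdsWithin_neBot, closure_Ioc hR.ne]
      exact ⟨le_rfl, hR.le⟩
    have ht : Filter.Tendsto w (𝓝[Set.Ioc (0:ℝ) R] 0) (𝓝 (w 0)) :=
      (hw.continuousWithinAt ⟨le_rfl, hR.le⟩).mono Set.Ioc_subset_Icc_self
    exact ge_of_tendsto ht (Filter.eventually_of_mem self_mem_nhdsWithin fun s hs => (hwpos s hs).le)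
  have hwnn : ∀ s ∈ Set.Icc (0:ℝ) R, 0 ≤ w s ^ (m - 1) := by
    intro s hs
    rcases eq_or_lt_of_le hs.1 with h | h
    · exact pow_nonneg (h ▸ hw0) _
    · exact pow_nonneg (hwpos s ⟨h, hs.2⟩).le _
  -- integrability
  have hsub : ∀ a b : ℝ, a ∈ Set.Icc (0:ℝ) R → b ∈ Set.Icc (0:ℝ) R →
      Set.uIcc a b ⊆ Set.Icc (0:ℝ) R := fun a b ha hb =>
    Set.uIcc_subset_Icc ha hb
  have hwint : ∀ a b : ℝ, a ∈ Set.Icc (0:ℝ) R → b ∈ Set.Icc (0:ℝ) R →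
      IntervalIntegrable (fun s => w s ^ (m - 1)) MeasureTheory.volume a b := by
    intro a b ha hb
    exact ((hw.pow (m-1)).mono (hsub a b ha hb)).intervalIntegrable
  have hwuint : ∀ a b : ℝ, a ∈ Set.Icc (0:ℝ) R → b ∈ Set.Icc (0:ℝ) R →
      IntervalIntegrable (fun s => w s ^ (m - 1) * u₁ s) MeasureTheory.volume a b := by
    intro a b ha hb
    have hu : IntervalIntegrable u₁ MeasureTheory.volume a b :=
      (hu₁dec.mono (hsub a b ha hb)).intervalIntegrable
    exact hu.continuousOn_mul ((hw.pow (m-1)).mono (hsub a b ha hb))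
  have h0R : (0:ℝ) ∈ Set.Icc (0:ℝ) R := ⟨le_rfl, hR.le⟩
  have hrI : r ∈ Set.Icc (0:ℝ) R := ⟨h0r, hrR⟩
  have htI : t ∈ Set.Icc (0:ℝ) R := ⟨h0t, htR⟩
  -- split the integrals
  have hsplit1 : (∫ s in (0:ℝ)..t, w s ^ (m - 1)) =
      (∫ s in (0:ℝ)..r, w s ^ (m - 1)) + (∫ s in r..t, w s ^ (m - 1)) :=
    (integral_add_adjacent_intervals (hwint 0 r h0R hrI) (hwint r t hrI htI)).symm
  have hsplit2 : (∫ s in (0:ℝ)..t, w s ^ (m - 1) * u₁ s) =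
      (∫ s in (0:ℝ)..r, w s ^ (m - 1) * u₁ s) + (∫ s in r..t, w s ^ (m - 1) * u₁ s) :=
    (integral_add_adjacent_intervals (hwuint 0 r h0R hrI) (hwuint r t hrI htI)).symm
  set A := ∫ s in (0:ℝ)..r, w s ^ (m - 1) with hA
  set B := ∫ s in r..t, w s ^ (m - 1) with hB
  set C := ∫ s in (0:ℝ)..r, w s ^ (m - 1) * u₁ s with hC
  set D := ∫ s in r..t, w s ^ (m - 1) * u₁ s with hD
  rw [hsplit1, hsplit2]
  have hAnn : 0 ≤ A :=
    integral_nonneg h0r (fun s hs => hwnn s ⟨hs.1, hs.2.trans hrR⟩)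
  have hBnn : 0 ≤ B :=
    integral_nonneg hrt (fun s hs => hwnn s ⟨h0r.trans hs.1, hs.2.trans htR⟩)
  have hu₁r : 0 ≤ u₁ r := (hu₁pos r hrI).le
  -- D ≤ u₁ r * B
  have hDle : D ≤ u₁ r * B := by
    have : D ≤ ∫ s in r..t, w s ^ (m - 1) * u₁ r := by
      apply integral_mono_on hrt (hwuint r t hrI htI)
        ((hwint r t hrI htI).mul_const _)
      intro s hs
      have hsI : s ∈ Set.Icc (0:ℝ) R := ⟨h0r.trans hs.1, hs.2.trans htR⟩
      exact mul_le_mul_of_nonneg_left (hu₁dec hrI hsI hs.1) (hwnn s hsI)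
    calc D ≤ ∫ s in r..t, w s ^ (m - 1) * u₁ r := this
      _ = u₁ r * B := by rw [integral_mul_const]; ring
  -- u₁ r * A ≤ C
  have hCge : u₁ r * A ≤ C := by
    have : (∫ s in (0:ℝ)..r, w s ^ (m - 1) * u₁ r) ≤ C := by
      apply integral_mono_on h0r ((hwint 0 r h0R hrI).mul_const _)
        (hwuint 0 r h0R hrI)
      intro s hs
      have hsI : s ∈ Set.Icc (0:ℝ) R := ⟨hs.1, hs.2.trans hrR⟩
      exact mul_le_mul_of_nonneg_left (hu₁dec hsI hrI hs.2) (hwnn s hsI)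
    calc u₁ r * A = ∫ s in (0:ℝ)..r, w s ^ (m - 1) * u₁ r := by
          rw [integral_mul_const]; ring
      _ ≤ C := this
  have key : A * D ≤ B * C := by
    calc A * D ≤ A * (u₁ r * B) := mul_le_mul_of_nonneg_left hDle hAnn
      _ = B * (u₁ r * A) := by ring
      _ ≤ B * C := mul_le_mul_of_nonneg_left hCge hBnn
  nlinarith [key]
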